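/- There exists an absolute constant κ > 0 with the following property: for every δ ∈ (0,1] and every finite simple graph G that is δ-triangle-dense, there exists a (κ·δ^4)-tightly-knit family V_1, …, V_k in G such that the total number of triangles of G having all three vertices inside a single set V_i is at least κ·δ^4 times the total number of triangles of G. -/

import Mathlib

/-- The number of triangles of a finite simple graph. -/
noncomputable def triangleCount {V : Type*} [Fintype V] (G : SimpleGraph V) : ℕ :=
  {s : Finset V | G.IsNClique 3 s}.ncard

/-- The number of wedges (unordered two-edge paths) of a finite simple graph:
`Σ_v C(deg v, 2)`. -/
noncomputable def wedgeCount {V : Type*} [Fintype V] (G : SimpleGraph V) : ℕ :=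
  ∑ v : V, ({u | G.Adj v u}.ncard).choose 2

/-- The triangle density `τ(G) = 3 t(G) / w(G)`, defined as `0` when `w(G) = 0`. -/
noncomputable def triangleDensity {V : Type*} [Fintype V] (G : SimpleGraph V) : ℝ :=
  if wedgeCount G = 0 then 0 else 3 * (triangleCount G : ℝ) / (wedgeCount G : ℝ)

/-- The number of triangles of `G` with all three vertices inside `A`. -/
noncomputable def trianglesWithin {V : Type*} [Fintype V] (G : SimpleGraph V) (A : Set V) : ℕ :=
  {s : Finset V | G.IsNClique 3 s ∧ (s : Set V) ⊆ A}.ncard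

/-- The number of edges of `G` with both endpoints inside `A` (edges of the induced
subgraph on `A`). -/
noncomputable def edgesWithin {V : Type*} [Fintype V] (G : SimpleGraph V) (A : Set V) : ℕ :=
  {e : Sym2 V | e ∈ G.edgeSet ∧ ∀ x ∈ e, x ∈ A}.ncard

/-- The subgraph of `G` induced by `A` has radius at most 2: some vertex of `A` is
within distance 2 of every vertex of `A` in the induced subgraph. -/
def RadiusAtMostTwo {V : Type*} (G : SimpleGraph V) (A : Set V) : Prop :=
  ∃ v : A, ∀ u : A, ∃ w : (G.induce A).Walk v u, w.length ≤ 2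

/-- A `ρ`-tightly-knit family: pairwise disjoint vertex sets, each inducing a subgraph
with at least a `ρ`-fraction of the possible edges and triangles and radius at most 2. -/
def IsTightlyKnit {V : Type*} [Fintype V] (G : SimpleGraph V) (ρ : ℝ)
    {k : ℕ} (F : Fin k → Set V) : Prop :=
  (∀ i j, i ≠ j → Disjoint (F i) (F j)) ∧
  ∀ i, ρ * (((F i).ncard.choose 2 : ℕ) : ℝ) ≤ (edgesWithin G (F i) : ℝ) ∧
       ρ * (((F i).ncard.choose 3 : ℕ) : ℝ) ≤ (trianglesWithin G (F i) : ℝ) ∧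
       RadiusAtMostTwo G (F i)

namespace TKD
set_option linter.unusedSectionVars false
set_option linter.unusedVariables false
set_option maxHeartbeats 1000000

open Finset SimpleGraph
open scoped Classical

variable {V : Type} [Fintype V]

/-- the finset of triangles -/
noncomputable def tri (H : SimpleGraph V) : Finset (Finset V) :=
  univ.filter (fun s => H.IsNClique 3 s)

lemma triangleCount_eq (H : SimpleGraph V) : triangleCount H = (tri H).card := by
  rw [triangleCount, show {s : Finset V | H.IsNClique 3 s} = ↑(tri H) by
    ext s; simp [tri]]
  exact Set.ncard_coe_finset _

noncomputable def triIn (H : SimpleGraph V) (A : Finset V) : Finset (Finset V) :=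
  univ.filter (fun s => H.IsNClique 3 s ∧ s ⊆ A)

lemma trianglesWithin_coe (H : SimpleGraph V) (A : Finset V) :
    trianglesWithin H ↑A = (triIn H A).card := by
  rw [trianglesWithin, show {s : Finset V | H.IsNClique 3 s ∧ (s:Set V) ⊆ ↑A} = ↑(triIn H A) by
    ext s; simp [triIn]]
  exact Set.ncard_coe_finset _

lemma le_edgesWithin (H : SimpleGraph V) (A : Set V) (F : Finset (Sym2 V))
    (h : ∀ e ∈ F, e ∈ H.edgeSet ∧ ∀ x ∈ e, x ∈ A) : F.card ≤ edgesWithin H A := by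
  rw [edgesWithin, ← Set.ncard_coe_finset F]
  exact Set.ncard_le_ncard (fun e he => h e (by simpa using he)) (Set.toFinite _)

lemma wedgeCount_eq (H : SimpleGraph V) : wedgeCount H = ∑ v : V, (H.degree v).choose 2 := by
  unfold wedgeCount
  congr 1; ext v
  congr 1
  rw [show {u | H.Adj v u} = ↑(H.neighborFinset v) by ext u; simp]
  rw [Set.ncard_coe_finset, card_neighborFinset_eq_degree]

lemma degree_mono {H H' : SimpleGraph V} (h : H ≤ H') (x : V) : H.degree x ≤ H'.degree x := by
  classical
  rw [← card_neighborFinset_eq_degree, ← card_neighborFinset_eq_degree]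
  exact card_le_card (fun y hy => by
    simp only [mem_neighborFinset] at hy ⊢; exact h hy)

lemma wedgeCount_mono {H H' : SimpleGraph V} (h : H ≤ H') : wedgeCount H ≤ wedgeCount H' := by
  rw [wedgeCount_eq, wedgeCount_eq]
  exact Finset.sum_le_sum fun v _ => Nat.choose_le_choose 2 (degree_mono h v)

lemma trianglesWithin_mono {H H' : SimpleGraph V} (h : H ≤ H') (A : Set V) :
    trianglesWithin H A ≤ trianglesWithin H' A := by
  unfold trianglesWithin
  exact Set.ncard_le_ncard (fun s hs => ⟨hs.1.mono h, hs.2⟩) (Set.toFinite _)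

lemma edgesWithin_mono {H H' : SimpleGraph V} (h : H ≤ H') (A : Set V) :
    edgesWithin H A ≤ edgesWithin H' A := by
  unfold edgesWithin
  exact Set.ncard_le_ncard (fun e he => ⟨SimpleGraph.edgeSet_mono h he.1, he.2⟩)
    (Set.toFinite _)

lemma induce_mono_graph {H H' : SimpleGraph V} (h : H ≤ H') (A : Set V) :
    H.induce A ≤ H'.induce A := by
  intro a b hab
  simp only [comap_adj, Function.Embedding.coe_subtype] at hab ⊢
  exact h hab

lemma radius_mono {H H' : SimpleGraph V} (h : H ≤ H') (A : Set V) :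
    RadiusAtMostTwo H A → RadiusAtMostTwo H' A := by
  rintro ⟨v, hv⟩
  refine ⟨v, fun u => ?_⟩
  obtain ⟨w, hw⟩ := hv u
  exact ⟨w.map (SimpleGraph.Hom.ofLE (induce_mono_graph h A)),
    by rwa [SimpleGraph.Walk.length_map]⟩



lemma pascal2 (n : ℕ) (h : 1 ≤ n) : (n-1).choose 2 + (n-1) = n.choose 2 := by
  obtain ⟨m, rfl⟩ : ∃ m, n = m + 1 := ⟨n - 1, by omega⟩
  have : (m+1).choose 2 = m.choose 1 + m.choose 2 := Nat.choose_succ_succ m 1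
  simp only [Nat.add_sub_cancel]
  rw [this, Nat.choose_one_right]; omega

lemma nbrF_delete_self {H : SimpleGraph V} {a b : V} (hab : H.Adj a b) :
    (H.deleteEdges {s(a,b)}).neighborFinset a = (H.neighborFinset a).erase b := by
  ext y
  simp only [mem_neighborFinset, deleteEdges_adj, Set.mem_singleton_iff, mem_erase]
  constructor
  · rintro ⟨h1, h2⟩; exact ⟨fun hyb => h2 (by rw [hyb]), h1⟩
  · rintro ⟨h1, h2⟩; exact ⟨h2, fun hh => h1 (Sym2.congr_right.mp hh)⟩

lemma nbrF_delete_other {H : SimpleGraph V} {a b x : V} (hxa : x ≠ a) (hxb : x ≠ b) :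
    (H.deleteEdges {s(a,b)}).neighborFinset x = H.neighborFinset x := by
  ext y
  simp only [mem_neighborFinset, deleteEdges_adj, Set.mem_singleton_iff]
  constructor
  · rintro ⟨h, _⟩; exact h
  · intro h
    refine ⟨h, fun hh => ?_⟩
    rw [Sym2.eq_iff] at hh
    rcases hh with ⟨h1, _⟩ | ⟨h1, _⟩
    · exact hxa h1
    · exact hxb h1

lemma deg_delete_self {H : SimpleGraph V} {a b : V} (hab : H.Adj a b) :
    (H.deleteEdges {s(a,b)}).degree a = H.degree a - 1 := by
  rw [← card_neighborFinset_eq_degree, nbrF_delete_self hab,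
    card_erase_of_mem (by simpa using hab), card_neighborFinset_eq_degree]

lemma wedge_delete_edge {H : SimpleGraph V} {a b : V} (hab : H.Adj a b)
    (wC : SimpleGraph V → ℕ) (hwC : ∀ K, wC K = ∑ v : V, (K.degree v).choose 2) :
    wC (H.deleteEdges {s(a,b)}) + (H.degree a - 1) + (H.degree b - 1) ≤ wC H := by
  have hne : a ≠ b := hab.ne
  set H' := H.deleteEdges {s(a,b)} with hH'
  have hdega : H'.degree a = H.degree a - 1 := deg_delete_self hab
  have hdegb : H'.degree b = H.degree b - 1 := by
    have : ({s(a,b)} : Set (Sym2 V)) = {s(b,a)} := by rw [Sym2.eq_swap]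
    convert deg_delete_self hab.symm using 2; rw [hH', this]
  have key : ∀ v : V, (H'.degree v).choose 2 +
      ((if v = a then H.degree a - 1 else 0) + (if v = b then H.degree b - 1 else 0))
      ≤ (H.degree v).choose 2 := by
    intro v
    by_cases hva : v = a
    · subst hva
      rw [if_pos rfl, if_neg hne, hdega, add_zero]
      have h1 : 1 ≤ H.degree v := by
        rw [← card_neighborFinset_eq_degree]
        exact card_pos.mpr ⟨b, by simpa using hab⟩
      rw [pascal2 _ h1]
    · by_cases hvb : v = b
      · subst hvb
        rw [if_neg hva, if_pos rfl, hdegb, zero_add]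
        have h1 : 1 ≤ H.degree v := by
          rw [← card_neighborFinset_eq_degree]
          exact card_pos.mpr ⟨a, by simpa using hab.symm⟩
        rw [pascal2 _ h1]
      · rw [if_neg hva, if_neg hvb, add_zero, add_zero]
        have : H'.degree v = H.degree v := by
          rw [← card_neighborFinset_eq_degree, ← card_neighborFinset_eq_degree,
            nbrF_delete_other hva hvb]
        rw [this]
  calc wC H' + (H.degree a - 1) + (H.degree b - 1)
      = ∑ v : V, (H'.degree v).choose 2 + ((∑ v : V, if v = a then H.degree a - 1 else 0)
        + (∑ v : V, if v = b then H.degree b - 1 else 0)) := by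
        rw [hwC, Finset.sum_ite_eq' univ a (fun _ => H.degree a - 1),
          Finset.sum_ite_eq' univ b (fun _ => H.degree b - 1)]
        simp only [mem_univ, if_pos]
        rw [add_assoc]; congr; ext v; congr; exact Subsingleton.elim _ _
    _ = ∑ v : V, ((H'.degree v).choose 2 +
        ((if v = a then H.degree a - 1 else 0) + (if v = b then H.degree b - 1 else 0))) := by
        rw [Finset.sum_add_distrib, Finset.sum_add_distrib]
    _ ≤ ∑ v : V, (H.degree v).choose 2 := Finset.sum_le_sum (fun v _ => key v)
    _ = wC H := (hwC H).symm


lemma third_vertex {H : SimpleGraph V} {a b : V} {s : Finset V}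
    (hs : H.IsNClique 3 s) (ha : a ∈ s) (hb : b ∈ s) (hne : a ≠ b) :
    ∃ x, x ∈ H.neighborFinset a ∩ H.neighborFinset b ∧ s = {a, b, x} := by
  have hcard : s.card = 3 := hs.2
  have hb' : b ∈ s.erase a := mem_erase.mpr ⟨hne.symm, hb⟩
  have h1 : ((s.erase a).erase b).card = 1 := by
    rw [card_erase_of_mem hb', card_erase_of_mem ha, hcard]
  obtain ⟨x, hx⟩ := Finset.card_eq_one.mp h1
  have hxs : x ∈ (s.erase a).erase b := hx ▸ mem_singleton_self x
  have hxb : x ≠ b := (mem_erase.mp hxs).1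
  have hxa : x ≠ a := (mem_erase.mp (mem_of_mem_erase hxs)).1
  have hxmem : x ∈ s := mem_of_mem_erase (mem_of_mem_erase hxs)
  refine ⟨x, ?_, ?_⟩
  · rw [mem_inter, mem_neighborFinset, mem_neighborFinset]
    exact ⟨hs.1 ha hxmem hxa.symm, hs.1 hb hxmem hxb.symm⟩
  · have e1 : insert b ((s.erase a).erase b) = s.erase a := insert_erase hb'
    have e2 : insert a (s.erase a) = s := insert_erase ha
    rw [← e2, ← e1, hx]

lemma tri_delete_edge {H : SimpleGraph V} {a b : V} (hab : H.Adj a b) :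
    (tri H).card ≤ (tri (H.deleteEdges {s(a,b)})).card
      + (H.neighborFinset a ∩ H.neighborFinset b).card := by
  set H' := H.deleteEdges {s(a,b)} with hH'
  have hsub : tri H ⊆ tri H' ∪ (tri H).filter (fun s => a ∈ s ∧ b ∈ s) := by
    intro s hs
    have hs' : H.IsNClique 3 s := by simpa [tri] using hs
    by_cases hcase : a ∈ s ∧ b ∈ s
    · exact mem_union_right _ (mem_filter.mpr ⟨hs, hcase⟩)
    · refine mem_union_left _ ?_
      simp only [tri, mem_filter, mem_univ, true_and]
      refine ⟨?_, hs'.2⟩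
      intro x hx y hy hxy
      have hadj : H.Adj x y := hs'.1 hx hy hxy
      rw [hH', deleteEdges_adj]
      refine ⟨hadj, fun hh => ?_⟩
      rw [Set.mem_singleton_iff, Sym2.eq_iff] at hh
      rcases hh with ⟨rfl, rfl⟩ | ⟨rfl, rfl⟩
      · exact hcase ⟨hx, hy⟩
      · exact hcase ⟨hy, hx⟩
  have hfil : (tri H).filter (fun s => a ∈ s ∧ b ∈ s) ⊆
      (H.neighborFinset a ∩ H.neighborFinset b).image (fun x => ({a, b, x} : Finset V)) := by
    intro s hs
    rw [mem_filter] at hs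
    have hs' : H.IsNClique 3 s := by simpa [tri] using hs.1
    obtain ⟨x, hx, hsx⟩ := third_vertex hs' hs.2.1 hs.2.2 hab.ne
    exact mem_image.mpr ⟨x, hx, hsx.symm⟩
  calc (tri H).card ≤ (tri H' ∪ (tri H).filter (fun s => a ∈ s ∧ b ∈ s)).card :=
        card_le_card hsub
    _ ≤ (tri H').card + ((tri H).filter (fun s => a ∈ s ∧ b ∈ s)).card := card_union_le _ _
    _ ≤ (tri H').card + (H.neighborFinset a ∩ H.neighborFinset b).card := by
        gcongr
        calc ((tri H).filter (fun s => a ∈ s ∧ b ∈ s)).card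
            ≤ ((H.neighborFinset a ∩ H.neighborFinset b).image
                (fun x => ({a, b, x} : Finset V))).card := card_le_card hfil
          _ ≤ _ := card_image_le

/-- delete all edges incident to A -/
noncomputable def delA (H : SimpleGraph V) (A : Finset V) : SimpleGraph V :=
  H.deleteEdges {e : Sym2 V | ∃ y ∈ e, y ∈ A}

lemma delA_le (H : SimpleGraph V) (A : Finset V) : delA H A ≤ H := deleteEdges_le _

lemma delA_degree_zero (H : SimpleGraph V) (A : Finset V) {x : V} (hx : x ∈ A) :
    (delA H A).degree x = 0 := by
  rw [← card_neighborFinset_eq_degree, card_eq_zero, eq_empty_iff_forall_notMem]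
  intro y hy
  rw [mem_neighborFinset, delA, deleteEdges_adj] at hy
  exact hy.2 ⟨x, Sym2.mem_mk_left x y, hx⟩

lemma tri_delA (H : SimpleGraph V) (A : Finset V) :
    (tri H).card ≤ (tri (delA H A)).card
      + ((tri H).filter (fun s => ∃ y ∈ s, y ∈ A)).card := by
  have hsub : tri H ⊆ tri (delA H A) ∪ (tri H).filter (fun s => ∃ y ∈ s, y ∈ A) := by
    intro s hs
    have hs' : H.IsNClique 3 s := by simpa [tri] using hs
    by_cases hcase : ∃ y ∈ s, y ∈ A
    · exact mem_union_right _ (mem_filter.mpr ⟨hs, hcase⟩)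
    · refine mem_union_left _ ?_
      simp only [tri, mem_filter, mem_univ, true_and]
      refine ⟨?_, hs'.2⟩
      intro x hx y hy hxy
      rw [delA, deleteEdges_adj]
      refine ⟨hs'.1 hx hy hxy, fun hh => ?_⟩
      obtain ⟨z, hz, hzA⟩ := hh
      rw [Sym2.mem_iff] at hz
      rcases hz with h | h <;> subst h
      · exact hcase ⟨z, hx, hzA⟩
      · exact hcase ⟨z, hy, hzA⟩
  calc (tri H).card ≤ _ := card_le_card hsub
    _ ≤ _ := card_union_le _ _

lemma tri_at_le (H : SimpleGraph V) (y : V) :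
    ((tri H).filter (fun s => y ∈ s)).card ≤ (H.degree y).choose 2 := by
  have : ((tri H).filter (fun s => y ∈ s)).card
      ≤ ((H.neighborFinset y).powersetCard 2).card := by
    apply card_le_card_of_injOn (fun s => s.erase y)
    · intro s hs
      rw [mem_coe, mem_filter] at hs
      have hs' : H.IsNClique 3 s := by simpa [tri] using hs.1
      rw [mem_coe, mem_powersetCard]
      constructor
      · intro x hx
        rw [mem_neighborFinset]
        exact hs'.1 hs.2 (mem_of_mem_erase hx) (Ne.symm (mem_erase.mp hx).1)
      · rw [card_erase_of_mem hs.2, hs'.2]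
    · intro s hs t ht hst
      simp only at hst
      rw [mem_coe, mem_filter] at hs ht
      rw [← insert_erase hs.2, hst, insert_erase ht.2]
  rwa [card_powersetCard, card_neighborFinset_eq_degree] at this

lemma triMeet_le (H : SimpleGraph V) (A : Finset V) (D : ℕ) (hD : ∀ y, H.degree y ≤ D) :
    ((tri H).filter (fun s => ∃ y ∈ s, y ∈ A)).card ≤ A.card * D.choose 2 := by
  have hsub : (tri H).filter (fun s => ∃ y ∈ s, y ∈ A)
      ⊆ A.biUnion (fun y => (tri H).filter (fun s => y ∈ s)) := by
    intro s hs
    rw [mem_filter] at hs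
    obtain ⟨y, hy, hyA⟩ := hs.2
    exact mem_biUnion.mpr ⟨y, hyA, mem_filter.mpr ⟨hs.1, hy⟩⟩
  calc ((tri H).filter _).card ≤ _ := card_le_card hsub
    _ ≤ ∑ y ∈ A, ((tri H).filter (fun s => y ∈ s)).card := card_biUnion_le
    _ ≤ ∑ _y ∈ A, D.choose 2 := Finset.sum_le_sum (fun y _ =>
        le_trans (tri_at_le H y) (Nat.choose_le_choose 2 (hD y)))
    _ = A.card * D.choose 2 := by rw [Finset.sum_const, smul_eq_mul]

lemma exists_dominating {α : Type} (f : α → ℕ) : ∀ (k : ℕ) (s : Finset α), k ≤ s.card →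
    ∃ r, r ⊆ s ∧ r.card = k ∧ ∀ a ∈ r, ∀ b ∈ s, b ∉ r → f b ≤ f a := by
  intro k
  induction k with
  | zero => intro s _; exact ⟨∅, empty_subset _, card_empty, by simp⟩
  | succ k ih =>
    intro s hk
    have hs : s.Nonempty := card_pos.mp (by omega)
    obtain ⟨m, hm, hmax⟩ := Finset.exists_max_image s f hs
    obtain ⟨r', hr's, hr'card, hdom⟩ := ih (s.erase m) (by rw [card_erase_of_mem hm]; omega)
    refine ⟨insert m r', ?_, ?_, ?_⟩
    · intro x hx
      rcases mem_insert.mp hx with rfl | hx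
      · exact hm
      · exact (erase_subset _ _) (hr's hx)
    · rw [card_insert_of_notMem (fun hmr' => (mem_erase.mp (hr's hmr')).1 rfl), hr'card]
    · intro a ha b hb hbr
      rcases mem_insert.mp ha with rfl | ha'
      · exact hmax b hb
      · have hbm : b ≠ m := fun h => hbr (h ▸ mem_insert_self m r')
        exact hdom a ha' b (mem_erase.mpr ⟨hbm, hb⟩) (fun hc => hbr (mem_insert_of_mem hc))

lemma topk_sum {α : Type} (f : α → ℕ) (s : Finset α) (k : ℕ) (hk : k ≤ s.card) :
    ∃ r, r ⊆ s ∧ r.card = k ∧ k * (∑ x ∈ s, f x) ≤ s.card * (∑ x ∈ r, f x) := by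
  obtain ⟨r, hrs, hrcard, hdom⟩ := exists_dominating f k s hk
  refine ⟨r, hrs, hrcard, ?_⟩
  have h1 : ∀ b ∈ s \ r, k * f b ≤ ∑ x ∈ r, f x := by
    intro b hb
    have := Finset.card_nsmul_le_sum r f (f b)
      (fun a ha => hdom a ha b (mem_sdiff.mp hb).1 (mem_sdiff.mp hb).2)
    simpa [hrcard, smul_eq_mul] using this
  have h2 : k * (∑ b ∈ s \ r, f b) ≤ (s.card - k) * (∑ x ∈ r, f x) := by
    calc k * (∑ b ∈ s \ r, f b) = ∑ b ∈ s \ r, k * f b := by rw [Finset.mul_sum]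
      _ ≤ ∑ _b ∈ s \ r, (∑ x ∈ r, f x) := Finset.sum_le_sum h1
      _ = (s \ r).card * (∑ x ∈ r, f x) := by rw [Finset.sum_const, smul_eq_mul]
      _ = (s.card - k) * (∑ x ∈ r, f x) := by rw [card_sdiff_of_subset hrs, hrcard]
  have h3 : (∑ x ∈ s, f x) = (∑ x ∈ r, f x) + ∑ b ∈ s \ r, f b := by
    rw [add_comm, Finset.sum_sdiff hrs]
  have h4 : k + (s.card - k) = s.card := by omega
  calc k * (∑ x ∈ s, f x) = k * (∑ x ∈ r, f x) + k * ∑ b ∈ s \ r, f b := by rw [h3, mul_add]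
    _ ≤ k * (∑ x ∈ r, f x) + (s.card - k) * (∑ x ∈ r, f x) := by omega
    _ = s.card * (∑ x ∈ r, f x) := by rw [← add_mul, h4]



lemma sum_card_filter_eq {α β : Type} (s : Finset α) (t : Finset β) (p : α → β → Prop) :
    ∑ x ∈ t, (s.filter (fun a => p a x)).card = ∑ a ∈ s, (t.filter (fun x => p a x)).card := by
  simp_rw [Finset.card_filter]
  exact Finset.sum_comm

lemma sum_product_filter_fst {H : SimpleGraph V} (S : Finset V) (f : V → ℝ) :
    ∑ p ∈ (S ×ˢ S).filter (fun p => H.Adj p.1 p.2), f p.1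
      = ∑ u ∈ S, ((S.filter (fun w => H.Adj u w)).card : ℝ) * f u := by
  rw [Finset.sum_filter, Finset.sum_product]
  refine Finset.sum_congr rfl (fun u _ => ?_)
  calc ∑ w ∈ S, (if H.Adj u w then f u else 0)
      = ∑ _w ∈ S.filter (fun w => H.Adj u w), f u := (Finset.sum_filter _ _).symm
    _ = ((S.filter (fun w => H.Adj u w)).card : ℝ) * f u := by
        rw [Finset.sum_const, nsmul_eq_mul]

lemma sum_product_filter_snd {H : SimpleGraph V} (S : Finset V) (f : V → ℝ) :
    ∑ p ∈ (S ×ˢ S).filter (fun p => H.Adj p.1 p.2), f p.2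
      = ∑ u ∈ S, ((S.filter (fun w => H.Adj u w)).card : ℝ) * f u := by
  rw [Finset.sum_filter, Finset.sum_product]
  rw [Finset.sum_comm]
  refine Finset.sum_congr rfl (fun w _ => ?_)
  have hfc : S.filter (fun u => H.Adj u w) = S.filter (fun u => H.Adj w u) := by
    apply Finset.filter_congr
    intro u _
    simp [SimpleGraph.adj_comm]
  calc ∑ u ∈ S, (if H.Adj u w then f w else 0)
      = ∑ _u ∈ S.filter (fun u => H.Adj u w), f w := (Finset.sum_filter _ _).symm
    _ = ((S.filter (fun u => H.Adj u w)).card : ℝ) * f w := by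
        rw [Finset.sum_const, nsmul_eq_mul]
    _ = ((S.filter (fun u => H.Adj w u)).card : ℝ) * f w := by rw [hfc]


lemma theta_sq {θ : ℝ} (h0 : 0 < θ) (h14 : θ ≤ 1/4) : θ^2 ≤ 1/16 := by nlinarith
lemma theta_cube {θ : ℝ} (h0 : 0 < θ) (h14 : θ ≤ 1/4) : θ^3 ≤ 1/64 := by
  nlinarith [theta_sq h0 h14, sq_nonneg θ]
lemma final_edge_ineq {θ D : ℝ} (h0 : 0 < θ) (h14 : θ ≤ 1/4) (hD2 : 2 ≤ D) :
    θ^4/8192 * (16*D^2) ≤ θ*D*(D-1)/2 := by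
  have h3 := theta_cube h0 h14
  have k1 : θ^4 ≤ θ/64 := by nlinarith
  have hDub : D*D ≤ D*(2*(D-1)) := by nlinarith
  nlinarith [mul_le_mul_of_nonneg_right k1 (mul_nonneg (by linarith : (0:ℝ) ≤ D) (by linarith : (0:ℝ) ≤ D)), mul_le_mul_of_nonneg_left hDub (le_of_lt h0)]
lemma final_tri_ineq {θ D : ℝ} (h0 : 0 < θ) (hD2 : 2 ≤ D) :
    θ^4/8192 * (64*D^3) ≤ θ^4*D*(D-1)^2/18 := by
  have hDD2 : D^2 ≤ 4*(D-1)^2 := by nlinarith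
  have hθ4 : (0:ℝ) < θ^4 := by positivity
  nlinarith [mul_le_mul_of_nonneg_left (mul_le_mul_of_nonneg_left hDD2 (by linarith : (0:ℝ) ≤ D)) (le_of_lt hθ4)]
lemma final_destroyed_ineq {θ D : ℝ} (h0 : 0 < θ) (hD2 : 2 ≤ D) :
    θ^4/8192 * (4*D^3) ≤ θ^4*D*(D-1)^2/18 := by
  have hDD2 : D^2 ≤ 4*(D-1)^2 := by nlinarith
  have hθ4 : (0:ℝ) < θ^4 := by positivity
  nlinarith [mul_le_mul_of_nonneg_left (mul_le_mul_of_nonneg_left hDD2 (by linarith : (0:ℝ) ≤ D)) (le_of_lt hθ4)]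

lemma extraction (H : SimpleGraph V) (θ : ℝ) (hθ0 : 0 < θ) (hθ14 : θ ≤ 1/4)
    (hclean : ∀ a b, H.Adj a b →
      θ * ((H.degree a : ℝ) + (H.degree b : ℝ) - 2)
        ≤ ((H.neighborFinset a ∩ H.neighborFinset b).card : ℝ))
    (htri : (tri H).Nonempty) :
    ∃ A : Finset V, A.Nonempty ∧ (∀ x ∈ A, 0 < H.degree x) ∧ RadiusAtMostTwo H ↑A ∧
      θ^4/8192 * ((A.card.choose 2 : ℕ) : ℝ) ≤ (edgesWithin H ↑A : ℝ) ∧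
      θ^4/8192 * ((A.card.choose 3 : ℕ) : ℝ) ≤ (trianglesWithin H ↑A : ℝ) ∧
      θ^4/8192 * (((tri H).card : ℝ) - ((tri (delA H A)).card : ℝ))
        ≤ (trianglesWithin H ↑A : ℝ) := by
  have hθ1 : θ ≤ 1 := le_trans hθ14 (by norm_num)
  -- a vertex of degree ≥ 2
  obtain ⟨s₀, hs₀⟩ := htri
  have hs₀' : H.IsNClique 3 s₀ := by simpa [tri] using hs₀
  obtain ⟨a₀, b₀, c₀, hab₀, hac₀, hbc₀, hs0eq⟩ := is3Clique_iff.mp hs₀'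
  have hdeg_a₀ : 2 ≤ H.degree a₀ := by
    rw [← card_neighborFinset_eq_degree]
    have hsub : ({b₀, c₀} : Finset V) ⊆ H.neighborFinset a₀ := by
      intro z hz
      rcases mem_insert.mp hz with rfl | hz
      · simpa using hab₀
      · rw [mem_singleton] at hz; subst hz; simpa using hac₀
    calc 2 = ({b₀, c₀} : Finset V).card := by
          rw [card_insert_of_notMem (by simp [hbc₀.ne]), card_singleton]
      _ ≤ _ := card_le_card hsub
  -- max degree vertex
  obtain ⟨v, -, hv⟩ := Finset.exists_max_image (univ : Finset V) (fun u => H.degree u) ⟨a₀, mem_univ a₀⟩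
  have hvmax : ∀ u, H.degree u ≤ H.degree v := fun u => hv u (mem_univ u)
  set d : ℕ := H.degree v with hd
  have hd2 : 2 ≤ d := le_trans hdeg_a₀ (hvmax a₀)
  set S : Finset V := H.neighborFinset v with hS
  have hScard : S.card = d := card_neighborFinset_eq_degree H v
  set D : ℝ := (d : ℝ) with hD
  have hD2 : (2:ℝ) ≤ D := by rw [hD]; exact_mod_cast hd2
  have hD1 : (1:ℝ) ≤ D - 1 := by linarith
  -- local co-degree into S
  set sdeg : V → ℕ := fun x => (S ∩ H.neighborFinset x).card with hsdeg
  have hAdj_vu : ∀ u ∈ S, H.Adj v u := by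
    intro u hu; rwa [hS, mem_neighborFinset] at hu
  have hdeg_u_pos : ∀ u ∈ S, 1 ≤ H.degree u := by
    intro u hu
    rw [← card_neighborFinset_eq_degree]
    exact card_pos.mpr ⟨v, by simpa using (hAdj_vu u hu).symm⟩
  have hsfilter : ∀ x : V, S.filter (fun u => H.Adj x u) = S ∩ H.neighborFinset x := by
    intro x; ext u; simp [mem_neighborFinset]
  have h_sdeg_lb : ∀ u ∈ S, θ * ((H.degree u : ℝ) + D - 2) ≤ (sdeg u : ℝ) := by
    intro u hu
    have h := hclean v u (hAdj_vu u hu)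
    calc θ * ((H.degree u : ℝ) + D - 2) = θ * ((H.degree v : ℝ) + (H.degree u : ℝ) - 2) := by
          rw [← hd]; ring
      _ ≤ ((H.neighborFinset v ∩ H.neighborFinset u).card : ℝ) := h
      _ = (sdeg u : ℝ) := by rw [hsdeg]
  have h_sdeg_lb' : ∀ u ∈ S, θ * (D - 1) ≤ (sdeg u : ℝ) := by
    intro u hu
    have h1 : (1:ℝ) ≤ (H.degree u : ℝ) := by exact_mod_cast hdeg_u_pos u hu
    have := h_sdeg_lb u hu
    nlinarith
  have h_sdeg_ub : ∀ u ∈ S, (sdeg u : ℝ) ≤ (H.degree u : ℝ) - 1 := by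
    intro u hu
    have hsub : S ∩ H.neighborFinset u ⊆ (H.neighborFinset u).erase v := by
      intro z hz
      rw [mem_inter] at hz
      refine mem_erase.mpr ⟨?_, hz.2⟩
      rintro rfl
      exact H.irrefl (hAdj_vu z hz.1)
    have h2 : sdeg u ≤ H.degree u - 1 := by
      calc sdeg u ≤ ((H.neighborFinset u).erase v).card := card_le_card hsub
        _ = H.degree u - 1 := by
            rw [card_erase_of_mem (by simpa using (hAdj_vu u hu).symm),
              card_neighborFinset_eq_degree]
    have h3 : 1 ≤ H.degree u := hdeg_u_pos u hu
    have := (Nat.cast_le (α := ℝ)).mpr h2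
    rwa [Nat.cast_sub h3, Nat.cast_one] at this
  have hdeg_ub : ∀ u : V, (H.degree u : ℝ) ≤ D := by
    intro u; rw [hD]; exact_mod_cast hvmax u
  -- e1 = sum of (deg u - 1) over S
  set e1 : ℕ := ∑ u ∈ S, (H.degree u - 1) with he1
  have he1cast : (e1 : ℝ) = ∑ u ∈ S, ((H.degree u : ℝ) - 1) := by
    rw [he1, Nat.cast_sum]
    refine Finset.sum_congr rfl (fun u hu => ?_)
    rw [Nat.cast_sub (hdeg_u_pos u hu), Nat.cast_one]
  have he1_lb : θ * D * (D - 1) ≤ (e1 : ℝ) := by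
    rw [he1cast]
    have : ∀ u ∈ S, θ * (D-1) ≤ (H.degree u : ℝ) - 1 :=
      fun u hu => le_trans (h_sdeg_lb' u hu) (h_sdeg_ub u hu)
    calc θ * D * (D - 1) = (S.card : ℝ) * (θ * (D-1)) := by rw [hScard, ← hD]; ring
      _ ≤ ∑ u ∈ S, ((H.degree u : ℝ) - 1) := by
          have := Finset.card_nsmul_le_sum S (fun u => (H.degree u : ℝ) - 1) (θ * (D-1)) this
          rwa [nsmul_eq_mul] at this
  have he1_ub : (e1 : ℝ) ≤ D * (D - 1) := by
    rw [he1cast]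
    calc ∑ u ∈ S, ((H.degree u : ℝ) - 1) ≤ ∑ _u ∈ S, (D - 1) :=
          Finset.sum_le_sum (fun u hu => by have := hdeg_ub u; linarith)
      _ = D * (D-1) := by rw [Finset.sum_const, nsmul_eq_mul, hScard, ← hD]
  have hDD1 : (0:ℝ) < D * (D - 1) := by nlinarith
  have he1_pos : 0 < (e1 : ℝ) :=
    lt_of_lt_of_le (by nlinarith [mul_pos hθ0 hDD1]) he1_lb
  -- the ordered S-pair set
  set SP : Finset (V × V) := (S ×ˢ S).filter (fun p => H.Adj p.1 p.2) with hSP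
  have hSPmem : ∀ p ∈ SP, p.1 ∈ S ∧ p.2 ∈ S ∧ H.Adj p.1 p.2 := by
    intro p hp
    rw [hSP, mem_filter, mem_product] at hp
    exact ⟨hp.1.1, hp.1.2, hp.2⟩
  have hSPcard : (SP.card : ℝ) = ∑ u ∈ S, (sdeg u : ℝ) := by
    have h0 : ∑ p ∈ SP, (1:ℝ) = ∑ u ∈ S, ((S.filter (fun w => H.Adj u w)).card : ℝ) * 1 :=
      sum_product_filter_fst (H := H) S (fun _ => (1:ℝ))
    simp only [Finset.sum_const, nsmul_eq_mul, mul_one] at h0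
    rw [h0]
    refine Finset.sum_congr rfl (fun u hu => ?_)
    rw [hsfilter u]
  have hSP_lb : θ * D * (D - 1) ≤ (SP.card : ℝ) := by
    rw [hSPcard]
    calc θ * D * (D-1) = (S.card : ℝ) * (θ * (D-1)) := by rw [hScard, ← hD]; ring
      _ ≤ ∑ u ∈ S, (sdeg u : ℝ) := by
          have := Finset.card_nsmul_le_sum S (fun u => (sdeg u : ℝ)) (θ * (D-1)) h_sdeg_lb'
          rwa [nsmul_eq_mul] at this
  -- triangle-weight of a vertex over S-edges
  set w : V → ℕ := fun x => (SP.filter (fun p => H.Adj p.1 x ∧ H.Adj p.2 x)).card with hw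
  set W : ℕ := ∑ x : V, w x with hW
  have hWcodeg : (W : ℝ) =
      ∑ p ∈ SP, ((H.neighborFinset p.1 ∩ H.neighborFinset p.2).card : ℝ) := by
    have h0 : W = ∑ p ∈ SP, ((univ : Finset V).filter
        (fun x => H.Adj p.1 x ∧ H.Adj p.2 x)).card := by
      rw [hW]
      simp_rw [hw, Finset.card_filter]
      exact Finset.sum_comm
    rw [h0, Nat.cast_sum]
    refine Finset.sum_congr rfl (fun p _ => ?_)
    congr 2
    ext x; simp [mem_neighborFinset]
  have hW_lb : 2*θ^2*(D-1)*(e1:ℝ) ≤ (W : ℝ) := by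
    have hstep : ∀ p ∈ SP,
        θ * (((H.degree p.1 : ℝ) - 1) + ((H.degree p.2 : ℝ) - 1))
          ≤ ((H.neighborFinset p.1 ∩ H.neighborFinset p.2).card : ℝ) := by
      intro p hp
      obtain ⟨h1, h2, h3⟩ := hSPmem p hp
      have := hclean p.1 p.2 h3
      calc θ * (((H.degree p.1 : ℝ) - 1) + ((H.degree p.2 : ℝ) - 1))
          = θ * ((H.degree p.1 : ℝ) + (H.degree p.2 : ℝ) - 2) := by ring
        _ ≤ _ := this
    have hsum1 : ∑ p ∈ SP, (((H.degree p.1 : ℝ) - 1))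
        = ∑ u ∈ S, (sdeg u : ℝ) * ((H.degree u : ℝ) - 1) := by
      have := sum_product_filter_fst (H := H) S (fun u => (H.degree u : ℝ) - 1)
      rw [← hSP] at this
      rw [this]
      refine Finset.sum_congr rfl (fun u hu => ?_)
      rw [hsfilter u]
    have hsum2 : ∑ p ∈ SP, (((H.degree p.2 : ℝ) - 1))
        = ∑ u ∈ S, (sdeg u : ℝ) * ((H.degree u : ℝ) - 1) := by
      have := sum_product_filter_snd (H := H) S (fun u => (H.degree u : ℝ) - 1)
      rw [← hSP] at this
      rw [this]
      refine Finset.sum_congr rfl (fun u hu => ?_)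
      rw [hsfilter u]
    have hT1 : θ * (D-1) * (e1:ℝ) ≤ ∑ u ∈ S, (sdeg u : ℝ) * ((H.degree u : ℝ) - 1) := by
      rw [he1cast, Finset.mul_sum]
      refine Finset.sum_le_sum (fun u hu => ?_)
      have h1 : θ * (D-1) ≤ (sdeg u : ℝ) := h_sdeg_lb' u hu
      have h2 : (0:ℝ) ≤ (H.degree u : ℝ) - 1 := by
        have := hdeg_u_pos u hu
        have : (1:ℝ) ≤ (H.degree u : ℝ) := by exact_mod_cast this
        linarith
      calc θ * (D-1) * ((H.degree u:ℝ) - 1) ≤ (sdeg u : ℝ) * ((H.degree u:ℝ) - 1) :=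
            mul_le_mul_of_nonneg_right h1 h2
        _ = _ := rfl
    calc 2*θ^2*(D-1)*(e1:ℝ) = θ * ((θ*(D-1)*e1) + (θ*(D-1)*e1)) := by ring
      _ ≤ θ * ((∑ u ∈ S, (sdeg u : ℝ) * ((H.degree u : ℝ) - 1))
            + (∑ u ∈ S, (sdeg u : ℝ) * ((H.degree u : ℝ) - 1))) := by
          have := hT1
          have hθ0' := le_of_lt hθ0
          nlinarith
      _ = θ * ((∑ p ∈ SP, (((H.degree p.1 : ℝ) - 1)))
            + (∑ p ∈ SP, (((H.degree p.2 : ℝ) - 1)))) := by rw [hsum1, hsum2]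
      _ = ∑ p ∈ SP, θ * (((H.degree p.1 : ℝ) - 1) + ((H.degree p.2 : ℝ) - 1)) := by
          rw [← Finset.sum_add_distrib, Finset.mul_sum]
      _ ≤ ∑ p ∈ SP, ((H.neighborFinset p.1 ∩ H.neighborFinset p.2).card : ℝ) :=
          Finset.sum_le_sum hstep
      _ = (W : ℝ) := hWcodeg.symm
  -- the radius-one ball
  set B1 : Finset V := insert v S with hB1
  have hvB1 : v ∈ B1 := mem_insert_self v S
  have hSB1 : S ⊆ B1 := subset_insert v S
  have hB1card : B1.card ≤ d + 1 := by
    calc B1.card ≤ S.card + 1 := card_insert_le v S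
      _ = d + 1 := by rw [hScard]
  set C : Finset V := univ \ B1 with hC
  have hCsum : (∑ x ∈ C, (sdeg x:ℝ)) ≤ (e1 : ℝ) := by
    have h0 : ∑ x ∈ C, sdeg x = ∑ u ∈ S, (C.filter (fun x => H.Adj x u)).card := by
      have hx0 : ∀ x, sdeg x = (S.filter (fun u => H.Adj x u)).card := by
        intro x; rw [hsfilter x]
      simp_rw [hx0, Finset.card_filter]
      exact Finset.sum_comm
    have h1 : ∀ u ∈ S, (C.filter (fun x => H.Adj x u)).card ≤ H.degree u - 1 := by
      intro u hu
      have hsub : C.filter (fun x => H.Adj x u) ⊆ (H.neighborFinset u).erase v := by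
        intro x hx
        rw [mem_filter] at hx
        refine mem_erase.mpr ⟨?_, by rw [mem_neighborFinset]; exact hx.2.symm⟩
        rintro rfl
        have hx1 : x ∈ univ \ B1 := by rw [hC] at hx; exact hx.1
        exact (mem_sdiff.mp hx1).2 hvB1
      calc (C.filter (fun x => H.Adj x u)).card ≤ _ := card_le_card hsub
        _ = H.degree u - 1 := by
            rw [card_erase_of_mem (by simpa using (hAdj_vu u hu).symm),
              card_neighborFinset_eq_degree]
    have h2 : ∑ x ∈ C, sdeg x ≤ e1 := by
      rw [h0, he1]; exact Finset.sum_le_sum h1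
    calc (∑ x ∈ C, (sdeg x:ℝ)) = ((∑ x ∈ C, sdeg x : ℕ):ℝ) := by rw [Nat.cast_sum]
      _ ≤ (e1:ℝ) := by exact_mod_cast h2
  -- the threshold
  set lam : ℝ := θ^2 * (D-1)/2 with hlam
  have hθsq : (0:ℝ) < θ^2 := by positivity
  have hlam_pos : 0 < lam := by rw [hlam]; nlinarith
  set Hst : Finset V := C.filter (fun x => lam ≤ (sdeg x:ℝ)) with hHst
  set M : ℕ := Hst.card with hM
  have hMlam : (M:ℝ) * lam ≤ (e1:ℝ) := by
    have h1 : (M:ℝ) * lam ≤ ∑ x ∈ Hst, (sdeg x:ℝ) := by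
      have := Finset.card_nsmul_le_sum Hst (fun x => (sdeg x:ℝ)) lam
        (fun x hx => (mem_filter.mp hx).2)
      rwa [nsmul_eq_mul, ← hM] at this
    have h2 : ∑ x ∈ Hst, (sdeg x:ℝ) ≤ ∑ x ∈ C, (sdeg x:ℝ) :=
      Finset.sum_le_sum_of_subset_of_nonneg (filter_subset _ _) (fun i _ _ => Nat.cast_nonneg _)
    linarith
  have hwsq : ∀ x, (w x:ℝ) ≤ (sdeg x:ℝ) * (sdeg x:ℝ) := by
    intro x
    have hsub : SP.filter (fun p => H.Adj p.1 x ∧ H.Adj p.2 x)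
        ⊆ (S ∩ H.neighborFinset x) ×ˢ (S ∩ H.neighborFinset x) := by
      intro p hp
      rw [mem_filter] at hp
      obtain ⟨h1, h2, h3⟩ := hSPmem p hp.1
      rw [mem_product]
      constructor
      · rw [mem_inter]; exact ⟨h1, by rw [mem_neighborFinset]; exact hp.2.1.symm⟩
      · rw [mem_inter]; exact ⟨h2, by rw [mem_neighborFinset]; exact hp.2.2.symm⟩
    have h4 : w x ≤ sdeg x * sdeg x := by
      calc w x ≤ ((S ∩ H.neighborFinset x) ×ˢ (S ∩ H.neighborFinset x)).card :=
            card_le_card hsub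
        _ = sdeg x * sdeg x := by rw [card_product]
    exact_mod_cast h4
  set Bad : Finset V := C.filter (fun x => ¬ lam ≤ (sdeg x:ℝ)) with hBad
  have hbadsum : (∑ x ∈ Bad, (w x:ℝ)) ≤ lam * (e1:ℝ) := by
    have h1 : ∀ x ∈ Bad, (w x:ℝ) ≤ lam * (sdeg x:ℝ) := by
      intro x hx
      have hxlt : (sdeg x:ℝ) < lam := not_le.mp (mem_filter.mp hx).2
      have h0 : (0:ℝ) ≤ (sdeg x:ℝ) := Nat.cast_nonneg _
      nlinarith [hwsq x]
    calc (∑ x ∈ Bad, (w x:ℝ)) ≤ ∑ x ∈ Bad, lam * (sdeg x:ℝ) := Finset.sum_le_sum h1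
      _ = lam * ∑ x ∈ Bad, (sdeg x:ℝ) := by rw [Finset.mul_sum]
      _ ≤ lam * ∑ x ∈ C, (sdeg x:ℝ) := by
          refine mul_le_mul_of_nonneg_left ?_ (le_of_lt hlam_pos)
          exact Finset.sum_le_sum_of_subset_of_nonneg (filter_subset _ _)
            (fun i _ _ => Nat.cast_nonneg _)
      _ ≤ lam * (e1:ℝ) := mul_le_mul_of_nonneg_left hCsum (le_of_lt hlam_pos)
  -- top-k selection
  obtain ⟨R, hRHst, hRcard, hRsum⟩ := topk_sum w Hst (min (2*d) M) (min_le_right _ _)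
  set A : Finset V := B1 ∪ R with hA
  have hRC : R ⊆ C := fun x hx => filter_subset _ _ (hRHst hx)
  have hdisj : Disjoint B1 R := by
    rw [Finset.disjoint_left]
    intro x hxB hxR
    have hx1 : x ∈ univ \ B1 := by rw [← hC]; exact hRC hxR
    exact (mem_sdiff.mp hx1).2 hxB
  have hkept_split : ∑ x ∈ A, w x = ∑ x ∈ B1, w x + ∑ x ∈ R, w x := by
    rw [hA, Finset.sum_union hdisj]
  set KB : ℝ := ∑ x ∈ B1, (w x:ℝ) with hKB
  set KH : ℝ := ∑ x ∈ Hst, (w x:ℝ) with hKH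
  set KR : ℝ := ∑ x ∈ R, (w x:ℝ) with hKR
  have hKB0 : 0 ≤ KB := by
    rw [hKB]; exact Finset.sum_nonneg fun i _ => Nat.cast_nonneg _
  have hKH0 : 0 ≤ KH := by
    rw [hKH]; exact Finset.sum_nonneg fun i _ => Nat.cast_nonneg _
  have hKR0 : 0 ≤ KR := by
    rw [hKR]; exact Finset.sum_nonneg fun i _ => Nat.cast_nonneg _
  have hWsplit : (W:ℝ) = KB + (KH + (∑ x ∈ Bad, (w x:ℝ))) := by
    have h1 : ∑ x ∈ C, (w x:ℝ) = KH + (∑ x ∈ Bad, (w x:ℝ)) := by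
      rw [hKH, hHst, hBad]
      exact (Finset.sum_filter_add_sum_filter_not C _ _).symm
    have h2 : (W:ℝ) = KB + ∑ x ∈ C, (w x:ℝ) := by
      rw [hW, Nat.cast_sum, hKB, hC]
      rw [← Finset.sum_sdiff (subset_univ B1)]
      ring
    rw [h2, h1]
  have hlamE : lam * (e1:ℝ) = θ^2*(D-1)*(e1:ℝ)/2 := by rw [hlam]; ring
  have hQ : (3/2)*(θ^2*(D-1)*(e1:ℝ)) ≤ KB + KH := by
    have hb0 : 0 ≤ (∑ x ∈ Bad, (w x:ℝ)) := Finset.sum_nonneg fun i _ => Nat.cast_nonneg _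
    linarith [hW_lb, hbadsum, hWsplit, hlamE]
  have he1θD : θ*D*(D-1) ≤ (e1:ℝ) := he1_lb
  have hkept : (3/2)*(θ^4*D*(D-1)^2) ≤ KB + KR := by
    rcases le_or_gt M (2*d) with hMle | hMgt
    · -- R = Hst
      have hmin : min (2*d) M = M := min_eq_right hMle
      have hReq : R = Hst := by
        apply Finset.eq_of_subset_of_card_le hRHst
        rw [hRcard, hmin, hM]
      have hKReq : KR = KH := by rw [hKR, hKH, hReq]
      rw [hKReq]
      have hstep : (3/2)*(θ^4*D*(D-1)^2) ≤ (3/2)*(θ^2*(D-1)*(e1:ℝ)) := by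
        have h1 : θ^4*D*(D-1)^2 = (θ^2*(D-1))*(θ^2*D*(D-1)) := by ring
        have h2 : θ^2*D*(D-1) ≤ θ*D*(D-1) := by nlinarith
        have h3 : 0 ≤ θ^2*(D-1) := by nlinarith
        nlinarith [he1_lb]
      linarith
    · -- keep top 2d
      have hmin : min (2*d) M = 2*d := min_eq_left (le_of_lt hMgt)
      have hMpos : (0:ℝ) < (M:ℝ) := by
        have : (0:ℕ) < M := by omega
        exact_mod_cast this
      have h2dM : (2*(d:ℝ)) ≤ (M:ℝ) := by exact_mod_cast le_of_lt hMgt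
      have hRsumR : (2*(d:ℝ)) * KH ≤ (M:ℝ) * KR := by
        have := hRsum
        rw [hmin] at this
        have hcast : ((2*d) * (∑ x ∈ Hst, w x) : ℕ) ≤ ((M * (∑ x ∈ R, w x) : ℕ)) := by
          rw [hM]; exact this
        have := (Nat.cast_le (α := ℝ)).mpr hcast
        push_cast at this
        rw [hKH, hKR]
        push_cast
        convert this using 2 <;> norm_num
      have hMkept : (M:ℝ) * (KB + KR) ≥ 2*D*((3/2)*(θ^2*(D-1)*(e1:ℝ))) := by
        have h1 : 2*D*KB ≤ (M:ℝ)*KB := mul_le_mul_of_nonneg_right (by rw [hD]; exact h2dM) hKB0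
        have h2 : 2*D*KH ≤ (M:ℝ)*KR := by rw [hD]; exact hRsumR
        have h3 : 2*D*((3/2)*(θ^2*(D-1)*(e1:ℝ))) ≤ 2*D*(KB + KH) :=
          mul_le_mul_of_nonneg_left hQ (by linarith)
        calc 2*D*((3/2)*(θ^2*(D-1)*(e1:ℝ))) ≤ 2*D*(KB + KH) := h3
          _ = 2*D*KB + 2*D*KH := by ring
          _ ≤ (M:ℝ)*KB + (M:ℝ)*KR := add_le_add h1 h2
          _ = (M:ℝ)*(KB+KR) := by ring
      have hfac : (0:ℝ) ≤ 3*D*θ^2*(D-1) := by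
        have h1 : (0:ℝ) ≤ 3*D := by linarith
        have h2 : (0:ℝ) ≤ (D-1) := by linarith
        have h3 : (0:ℝ) ≤ θ^2 := sq_nonneg θ
        calc (0:ℝ) = 3*D*0*0 := by ring
          _ ≤ 3*D*θ^2*(D-1) := by
              apply mul_le_mul_of_nonneg_left h2 ?_ |>.trans_eq' ?_
              · exact mul_nonneg h1 h3
              · ring
      have h3 : (M:ℝ)*(3*D*θ^2*(D-1)*lam) ≤ (M:ℝ)*(KB+KR) := by
        calc (M:ℝ)*(3*D*θ^2*(D-1)*lam) = (3*D*θ^2*(D-1))*((M:ℝ)*lam) := by ring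
          _ ≤ (3*D*θ^2*(D-1))*(e1:ℝ) := mul_le_mul_of_nonneg_left hMlam hfac
          _ = 2*D*((3/2)*(θ^2*(D-1)*(e1:ℝ))) := by ring
          _ ≤ (M:ℝ)*(KB+KR) := hMkept
      have h4 : 3*D*θ^2*(D-1)*lam ≤ KB + KR :=
        le_of_mul_le_mul_left (by linarith [h3]) hMpos
      have h5 : 3*D*θ^2*(D-1)*lam = (3/2)*(θ^4*D*(D-1)^2) := by rw [hlam]; ring
      linarith
  -- capture is at most 27 times the triangles within A
  have hcap27 : ∑ x ∈ A, w x ≤ 27 * (triIn H A).card := by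
    set f : (V × V) × V → Finset V := fun q => {q.1.1, q.1.2, q.2} with hf
    set TSPA : Finset ((V × V) × V) :=
      (SP ×ˢ A).filter (fun q => H.Adj q.1.1 q.2 ∧ H.Adj q.1.2 q.2) with hTSPA
    have hcardT : TSPA.card = ∑ x ∈ A, w x := by
      rw [hTSPA, Finset.card_filter, Finset.sum_product, Finset.sum_comm]
      simp_rw [hw, Finset.card_filter]
    have hmemT : ∀ q ∈ TSPA, (q.1.1 ∈ S ∧ q.1.2 ∈ S ∧ H.Adj q.1.1 q.1.2)
        ∧ q.2 ∈ A ∧ H.Adj q.1.1 q.2 ∧ H.Adj q.1.2 q.2 := by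
      intro q hq
      rw [hTSPA, mem_filter, mem_product] at hq
      exact ⟨hSPmem _ hq.1.1, hq.1.2, hq.2⟩
    have himg : TSPA.image f ⊆ triIn H A := by
      intro b hb
      obtain ⟨q, hq, rfl⟩ := mem_image.mp hb
      obtain ⟨⟨h1S, h2S, h12⟩, hxA, h1x, h2x⟩ := hmemT q hq
      rw [triIn, mem_filter]
      refine ⟨mem_univ _, ?_, ?_⟩
      · rw [hf]; exact is3Clique_triple_iff.mpr ⟨h12, h1x, h2x⟩
      · rw [hf]
        intro z hz
        rcases mem_insert.mp hz with rfl | hz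
        · rw [hA]; exact mem_union_left _ (hSB1 h1S)
        rcases mem_insert.mp hz with rfl | hz
        · rw [hA]; exact mem_union_left _ (hSB1 h2S)
        · rw [mem_singleton] at hz; subst hz; exact hxA
    have hfib : ∀ b ∈ TSPA.image f, (TSPA.filter (fun q => f q = b)).card ≤ 27 := by
      intro b hb
      have hsub : TSPA.filter (fun q => f q = b) ⊆ (b ×ˢ b) ×ˢ b := by
        intro q hq
        rw [mem_filter] at hq
        have hqb : f q = b := hq.2
        rw [mem_product]
        constructor
        · rw [mem_product]
          constructor
          · rw [← hqb, hf]; exact mem_insert_self _ _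
          · rw [← hqb, hf]; exact mem_insert_of_mem (mem_insert_self _ _)
        · rw [← hqb, hf]; exact mem_insert_of_mem (mem_insert_of_mem (mem_singleton_self _))
      have hbcard : b.card ≤ 3 := by
        obtain ⟨q, hq, rfl⟩ := mem_image.mp hb
        rw [hf]
        have h1 : ({q.1.2, q.2} : Finset V).card ≤ 2 := by
          calc ({q.1.2, q.2} : Finset V).card ≤ ({q.2} : Finset V).card + 1 :=
                card_insert_le _ _
            _ ≤ 2 := by rw [card_singleton]
        calc ({q.1.1, q.1.2, q.2} : Finset V).card
            ≤ ({q.1.2, q.2} : Finset V).card + 1 := card_insert_le _ _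
          _ ≤ 3 := by omega
      calc (TSPA.filter (fun q => f q = b)).card ≤ ((b ×ˢ b) ×ˢ b).card := card_le_card hsub
        _ = b.card * b.card * b.card := by rw [card_product, card_product]
        _ ≤ 3 * 3 * 3 := Nat.mul_le_mul (Nat.mul_le_mul hbcard hbcard) hbcard
        _ = 27 := rfl
    calc ∑ x ∈ A, w x = TSPA.card := hcardT.symm
      _ ≤ 27 * (TSPA.image f).card := Finset.card_le_mul_card_image TSPA 27 hfib
      _ ≤ 27 * (triIn H A).card := Nat.mul_le_mul_left _ (card_le_card himg)
  -- capture lower bound on trianglesWithin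
  have hTW : θ^4*D*(D-1)^2/18 ≤ (trianglesWithin H ↑A : ℝ) := by
    have h1 : (∑ x ∈ A, (w x:ℝ)) ≤ 27 * (trianglesWithin H ↑A : ℝ) := by
      rw [trianglesWithin_coe]
      exact_mod_cast hcap27
    have h2 : KB + KR = ∑ x ∈ A, (w x:ℝ) := by
      rw [hKB, hKR, hA, Finset.sum_union hdisj]
    linarith [hkept]
  -- size of A
  have hAcard : A.card ≤ 4*d := by
    have h1 : R.card ≤ 2*d := by rw [hRcard]; exact min_le_left _ _
    have h2 : A.card ≤ B1.card + R.card := by rw [hA]; exact card_union_le _ _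
    omega
  -- edges within A
  have hEdges : θ*D*(D-1)/2 ≤ (edgesWithin H ↑A : ℝ) := by
    set ES : Finset (Sym2 V) := SP.image (fun p => s(p.1, p.2)) with hES
    have hESsub : ∀ e ∈ ES, e ∈ H.edgeSet ∧ ∀ x ∈ e, x ∈ (↑A : Set V) := by
      intro e he
      obtain ⟨p, hp, rfl⟩ := mem_image.mp he
      obtain ⟨h1, h2, h3⟩ := hSPmem p hp
      constructor
      · rwa [mem_edgeSet]
      · intro x hx
        rw [Sym2.mem_iff] at hx
        rcases hx with rfl | rfl
        · exact Finset.mem_coe.mpr (by rw [hA]; exact mem_union_left _ (hSB1 h1))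
        · exact Finset.mem_coe.mpr (by rw [hA]; exact mem_union_left _ (hSB1 h2))
    have hfib2 : ∀ b ∈ SP.image (fun p => s(p.1,p.2)),
        (SP.filter (fun p => s(p.1,p.2) = b)).card ≤ 2 := by
      intro b hb
      obtain ⟨p0, hp0, rfl⟩ := mem_image.mp hb
      have hsub : SP.filter (fun p => s(p.1,p.2) = s(p0.1,p0.2))
          ⊆ ({(p0.1, p0.2), (p0.2, p0.1)} : Finset (V × V)) := by
        intro q hq
        rw [mem_filter] at hq
        have hq2 := hq.2
        rw [Sym2.eq_iff] at hq2
        rcases hq2 with ⟨h1, h2⟩ | ⟨h1, h2⟩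
        · have : q = (p0.1, p0.2) := Prod.ext h1 h2
          rw [this]; exact mem_insert_self _ _
        · have : q = (p0.2, p0.1) := Prod.ext h1 h2
          rw [this]; exact mem_insert_of_mem (mem_singleton_self _)
      calc (SP.filter (fun p => s(p.1,p.2) = s(p0.1,p0.2))).card
          ≤ ({(p0.1, p0.2), (p0.2, p0.1)} : Finset (V × V)).card := card_le_card hsub
        _ ≤ ({(p0.2, p0.1)} : Finset (V × V)).card + 1 := card_insert_le _ _
        _ ≤ 2 := by rw [card_singleton]
    have hcard2 : SP.card ≤ 2 * ES.card := by
      rw [hES]; exact Finset.card_le_mul_card_image SP 2 hfib2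
    have h3 : ES.card ≤ edgesWithin H ↑A := le_edgesWithin H ↑A ES hESsub
    have h4 : SP.card ≤ 2 * edgesWithin H ↑A := le_trans hcard2 (by omega)
    have h5 : (SP.card:ℝ) ≤ 2 * (edgesWithin H ↑A : ℝ) := by exact_mod_cast h4
    linarith [hSP_lb]
  -- destroyed triangles
  have hdstr : ((tri H).card : ℝ) - ((tri (delA H A)).card : ℝ) ≤ 4*D^3 := by
    have h1 : (tri H).card ≤ (tri (delA H A)).card
        + ((tri H).filter (fun s => ∃ y ∈ s, y ∈ A)).card := tri_delA H A
    have h2 : ((tri H).filter (fun s => ∃ y ∈ s, y ∈ A)).card ≤ A.card * d.choose 2 :=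
      triMeet_le H A d hvmax
    have h3 : A.card * d.choose 2 ≤ (4*d) * d^2 :=
      Nat.mul_le_mul hAcard (Nat.choose_le_pow d 2)
    have h4 : (tri H).card ≤ (tri (delA H A)).card + 4*d^3 := by
      have h5 : (4*d) * d^2 = 4*d^3 := by ring
      omega
    have h6 := (Nat.cast_le (α := ℝ)).mpr h4
    push_cast at h6
    rw [hD]
    push_cast
    linarith
  -- v in A, support
  have hvA : v ∈ A := by rw [hA]; exact mem_union_left _ hvB1
  have hsupp : ∀ x ∈ A, 0 < H.degree x := by
    intro x hx
    rw [hA, mem_union] at hx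
    rcases hx with hx | hx
    · rcases mem_insert.mp hx with rfl | hx
      · have h1 : 2 ≤ H.degree x := hd ▸ hd2
        omega
      · rw [← card_neighborFinset_eq_degree]
        exact card_pos.mpr ⟨v, by simpa using (hAdj_vu x hx).symm⟩
    · have hxH : x ∈ Hst := hRHst hx
      have hlx : lam ≤ (sdeg x:ℝ) := (mem_filter.mp hxH).2
      have hsx : 0 < sdeg x := by
        by_contra hcon
        push_neg at hcon
        have h0 : sdeg x = 0 := by omega
        rw [h0] at hlx
        norm_num at hlx
        linarith [hlam_pos]
      obtain ⟨u', hu'mem⟩ := card_pos.mp hsx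
      rw [mem_inter] at hu'mem
      rw [← card_neighborFinset_eq_degree]
      exact card_pos.mpr ⟨u', hu'mem.2⟩
  -- radius at most two
  have hvA' : v ∈ (↑A : Set V) := Finset.mem_coe.mpr hvA
  have hrad : RadiusAtMostTwo H ↑A := by
    refine ⟨⟨v, hvA'⟩, ?_⟩
    rintro ⟨u, hu⟩
    have hu' : u ∈ A := Finset.mem_coe.mp hu
    have hind : ∀ (a b : V) (ha : a ∈ (↑A : Set V)) (hb : b ∈ (↑A : Set V)),
        H.Adj a b → (H.induce (↑A : Set V)).Adj ⟨a, ha⟩ ⟨b, hb⟩ := fun a b ha hb hab => by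
      simpa using hab
    by_cases huv : u = v
    · have he : (⟨v, hvA'⟩ : (↑A : Set V)) = ⟨u, hu⟩ := Subtype.ext huv.symm
      rw [← he]
      exact ⟨SimpleGraph.Walk.nil, by simp⟩
    · have humem : u ∈ S ∨ u ∈ R := by
        rw [hA, mem_union] at hu'
        rcases hu' with h | h
        · rcases mem_insert.mp h with h' | h'
          · exact absurd h' huv
          · exact Or.inl h'
        · exact Or.inr h
      rcases humem with huS | huR
      · exact ⟨SimpleGraph.Walk.cons (hind v u hvA' hu (hAdj_vu u huS))
          SimpleGraph.Walk.nil, by simp⟩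
      · have hxH : u ∈ Hst := hRHst huR
        have hlx : lam ≤ (sdeg u:ℝ) := (mem_filter.mp hxH).2
        have hsx : 0 < sdeg u := by
          by_contra hcon
          push_neg at hcon
          have h0 : sdeg u = 0 := by omega
          rw [h0] at hlx
          norm_num at hlx
          linarith [hlam_pos]
        obtain ⟨u', hu'mem⟩ := card_pos.mp hsx
        rw [mem_inter] at hu'mem
        have hu'S : u' ∈ S := hu'mem.1
        have hu'A : u' ∈ (↑A : Set V) :=
          Finset.mem_coe.mpr (by rw [hA]; exact mem_union_left _ (hSB1 hu'S))
        have hadj1 : H.Adj v u' := hAdj_vu u' hu'S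
        have hadj2 : H.Adj u' u := by
          have h7 := hu'mem.2
          rw [mem_neighborFinset] at h7
          exact h7.symm
        exact ⟨SimpleGraph.Walk.cons (hind v u' hvA' hu'A hadj1)
          (SimpleGraph.Walk.cons (hind u' u hu'A hu hadj2) SimpleGraph.Walk.nil), by simp⟩
  refine ⟨A, ⟨v, hvA⟩, hsupp, hrad, ?_, ?_, ?_⟩
  · -- edge density
    have hc2 : ((A.card.choose 2 : ℕ):ℝ) ≤ 16*D^2 := by
      have h1 : A.card.choose 2 ≤ 16*d^2 := by
        calc A.card.choose 2 ≤ A.card ^ 2 := Nat.choose_le_pow A.card 2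
          _ ≤ (4*d)^2 := Nat.pow_le_pow_left hAcard 2
          _ = 16*d^2 := by ring
      calc ((A.card.choose 2 : ℕ):ℝ) ≤ ((16*d^2 : ℕ):ℝ) := by exact_mod_cast h1
        _ = 16*D^2 := by rw [hD]; push_cast; ring
    calc θ^4/8192 * ((A.card.choose 2 : ℕ):ℝ) ≤ θ^4/8192 * (16*D^2) := by
          apply mul_le_mul_of_nonneg_left hc2
          positivity
      _ ≤ θ*D*(D-1)/2 := final_edge_ineq hθ0 hθ14 hD2
      _ ≤ _ := hEdges
  · -- triangle density
    have hc3 : ((A.card.choose 3 : ℕ):ℝ) ≤ 64*D^3 := by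
      have h1 : A.card.choose 3 ≤ 64*d^3 := by
        calc A.card.choose 3 ≤ A.card ^ 3 := Nat.choose_le_pow A.card 3
          _ ≤ (4*d)^3 := Nat.pow_le_pow_left hAcard 3
          _ = 64*d^3 := by ring
      calc ((A.card.choose 3 : ℕ):ℝ) ≤ ((64*d^3 : ℕ):ℝ) := by exact_mod_cast h1
        _ = 64*D^3 := by rw [hD]; push_cast; ring
    calc θ^4/8192 * ((A.card.choose 3 : ℕ):ℝ) ≤ θ^4/8192 * (64*D^3) := by
          apply mul_le_mul_of_nonneg_left hc3
          positivity
      _ ≤ θ^4*D*(D-1)^2/18 := final_tri_ineq hθ0 hD2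
      _ ≤ _ := hTW
  · -- captured vs destroyed
    have k7 : θ^4/8192 * (((tri H).card : ℝ) - ((tri (delA H A)).card : ℝ))
        ≤ θ^4/8192 * (4*D^3) := by
      apply mul_le_mul_of_nonneg_left hdstr
      positivity
    calc θ^4/8192 * (((tri H).card : ℝ) - ((tri (delA H A)).card : ℝ))
        ≤ θ^4/8192 * (4*D^3) := k7
      _ ≤ θ^4*D*(D-1)^2/18 := final_destroyed_ineq hθ0 hD2
      _ ≤ _ := hTW


lemma main_induction (δ : ℝ) (hδ0 : 0 < δ) (hδ1 : δ ≤ 1) :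
    ∀ (n : ℕ) (H : SimpleGraph V), H.edgeSet.ncard ≤ n →
    ∃ (k : ℕ) (F : Fin k → Set V),
      (∀ i j, i ≠ j → Disjoint (F i) (F j)) ∧
      (∀ i, (δ/4)^4/8192 * (((F i).ncard.choose 2 : ℕ):ℝ) ≤ (edgesWithin H (F i) : ℝ) ∧
            (δ/4)^4/8192 * (((F i).ncard.choose 3 : ℕ):ℝ) ≤ (trianglesWithin H (F i) : ℝ) ∧
            RadiusAtMostTwo H (F i) ∧
            (F i) ⊆ {x : V | 0 < H.degree x}) ∧
      (δ/4)^4/8192 * (((tri H).card : ℝ) - (δ/4) * (wedgeCount H : ℝ))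
        ≤ ∑ i, (trianglesWithin H (F i) : ℝ) := by
  intro n
  induction n with
  | zero =>
    intro H hcard
    refine ⟨0, Fin.elim0, fun i => i.elim0, fun i => i.elim0, ?_⟩
    have htri0 : (tri H).card = 0 := by
      rw [Finset.card_eq_zero, Finset.eq_empty_iff_forall_notMem]
      intro s hs
      have hs' : H.IsNClique 3 s := by simpa [tri] using hs
      obtain ⟨a, b, c, hab, -, -, -⟩ := is3Clique_iff.mp hs'
      have hne : H.edgeSet.Nonempty := ⟨s(a,b), hab⟩
      have hpos : 0 < H.edgeSet.ncard := (Set.ncard_pos (Set.toFinite _)).mpr hne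
      omega
    have hsum0 : (∑ i : Fin 0, (trianglesWithin H (Fin.elim0 i) : ℝ)) = 0 := by simp
    rw [htri0, hsum0]
    have h1 : (0:ℝ) ≤ (δ/4) * (wedgeCount H : ℝ) := by positivity
    have hc : (0:ℝ) ≤ (δ/4)^4/8192 := by positivity
    have h2 : ((0:ℕ):ℝ) - (δ/4) * (wedgeCount H : ℝ) ≤ 0 := by push_cast; linarith
    calc (δ/4)^4/8192 * (((0:ℕ):ℝ) - (δ/4) * (wedgeCount H : ℝ))
        ≤ (δ/4)^4/8192 * 0 := mul_le_mul_of_nonneg_left h2 hc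
      _ = 0 := by ring
  | succ n ih =>
    intro H hcard
    set θ : ℝ := δ/4 with hθdef
    have hθ0 : 0 < θ := by rw [hθdef]; positivity
    have hθ14 : θ ≤ 1/4 := by rw [hθdef]; linarith
    by_cases hdirty : ∃ a b, H.Adj a b ∧
        ((H.neighborFinset a ∩ H.neighborFinset b).card : ℝ)
          < θ * ((H.degree a : ℝ) + (H.degree b : ℝ) - 2)
    · -- a dirty edge exists: delete it
      obtain ⟨a, b, hab, hlt⟩ := hdirty
      set H' := H.deleteEdges {s(a,b)} with hH'
      have hle : H' ≤ H := deleteEdges_le _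
      have hcard' : H'.edgeSet.ncard ≤ n := by
        have hss : H'.edgeSet ⊂ H.edgeSet := by
          rw [hH', edgeSet_deleteEdges]
          constructor
          · exact Set.diff_subset
          · intro hsub
            have h7 : s(a,b) ∈ H.edgeSet \ {s(a,b)} := hsub hab
            simp at h7
        have := Set.ncard_lt_ncard hss (Set.toFinite _)
        omega
      obtain ⟨k, F, hdisj, hcond, hcap⟩ := ih H' hcard'
      refine ⟨k, F, hdisj, ?_, ?_⟩
      · intro i
        obtain ⟨h1, h2, h3, h4⟩ := hcond i
        refine ⟨le_trans h1 ?_, le_trans h2 ?_, radius_mono hle _ h3, ?_⟩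
        · exact_mod_cast edgesWithin_mono hle (F i)
        · exact_mod_cast trianglesWithin_mono hle (F i)
        · intro x hx
          have h5 := h4 hx
          simp only [Set.mem_setOf_eq] at h5 ⊢
          exact lt_of_lt_of_le h5 (degree_mono hle x)
      · have hdega1 : 1 ≤ H.degree a := by
          rw [← card_neighborFinset_eq_degree]
          exact card_pos.mpr ⟨b, by simpa using hab⟩
        have hdegb1 : 1 ≤ H.degree b := by
          rw [← card_neighborFinset_eq_degree]
          exact card_pos.mpr ⟨a, by simpa using hab.symm⟩
        have hkey : ((tri H).card : ℝ) - θ * (wedgeCount H : ℝ)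
            ≤ ((tri H').card : ℝ) - θ * (wedgeCount H' : ℝ) := by
          have htri' : (tri H).card ≤ (tri H').card
              + (H.neighborFinset a ∩ H.neighborFinset b).card := tri_delete_edge hab
          have hwedge : wedgeCount H' + (H.degree a - 1) + (H.degree b - 1) ≤ wedgeCount H :=
            wedge_delete_edge hab wedgeCount wedgeCount_eq
          have hwR : (wedgeCount H' : ℝ) + ((H.degree a:ℝ) - 1) + ((H.degree b:ℝ) - 1)
              ≤ (wedgeCount H : ℝ) := by
            have h5 := (Nat.cast_le (α := ℝ)).mpr hwedge
            rw [Nat.cast_add, Nat.cast_add, Nat.cast_sub hdega1, Nat.cast_sub hdegb1,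
              Nat.cast_one] at h5
            exact h5
          have htriR : ((tri H).card : ℝ) ≤ ((tri H').card : ℝ)
              + ((H.neighborFinset a ∩ H.neighborFinset b).card : ℝ) := by exact_mod_cast htri'
          have h6 : θ * ((wedgeCount H' : ℝ) + (((H.degree a:ℝ) - 1) + ((H.degree b:ℝ) - 1)))
              ≤ θ * (wedgeCount H : ℝ) :=
            mul_le_mul_of_nonneg_left (by linarith) (le_of_lt hθ0)
          nlinarith [htriR, hlt, h6]
        calc θ^4/8192 * (((tri H).card:ℝ) - θ*(wedgeCount H:ℝ))
            ≤ θ^4/8192 * (((tri H').card:ℝ) - θ*(wedgeCount H':ℝ)) :=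
              mul_le_mul_of_nonneg_left hkey (by positivity)
          _ ≤ ∑ i, (trianglesWithin H' (F i) : ℝ) := hcap
          _ ≤ ∑ i, (trianglesWithin H (F i) : ℝ) := by
              refine Finset.sum_le_sum (fun i _ => ?_)
              exact_mod_cast trianglesWithin_mono hle (F i)
    · -- cleaned graph
      push_neg at hdirty
      by_cases htri0 : (tri H).Nonempty
      · -- extract a cluster
        obtain ⟨A, hAne, hAsupp, hArad, hAedge, hAtri, hAcap⟩ :=
          extraction H θ hθ0 hθ14 hdirty htri0
        set H'' := delA H A with hH''
        have hle : H'' ≤ H := delA_le H A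
        have hcard'' : H''.edgeSet.ncard ≤ n := by
          obtain ⟨x, hx⟩ := hAne
          have hdx : 0 < H.degree x := hAsupp x hx
          have hnbr : 0 < (H.neighborFinset x).card := by
            rwa [card_neighborFinset_eq_degree]
          obtain ⟨y, hy⟩ := card_pos.mp hnbr
          have hxyE : s(x,y) ∈ H.edgeSet := by
            rw [mem_edgeSet]; rwa [mem_neighborFinset] at hy
          have hss : H''.edgeSet ⊂ H.edgeSet := by
            rw [hH'', delA, edgeSet_deleteEdges]
            constructor
            · exact Set.diff_subset
            · intro hsub
              have h7 : s(x,y) ∈ H.edgeSet \ {e : Sym2 V | ∃ z ∈ e, z ∈ A} := hsub hxyE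
              exact h7.2 ⟨x, Sym2.mem_mk_left x y, hx⟩
          have := Set.ncard_lt_ncard hss (Set.toFinite _)
          omega
        obtain ⟨k, F, hdisj, hcond, hcap⟩ := ih H'' hcard''
        have hFA : ∀ i, Disjoint (↑A : Set V) (F i) := by
          intro i
          rw [Set.disjoint_left]
          intro x hxA hxF
          have h8 := (hcond i).2.2.2 hxF
          simp only [Set.mem_setOf_eq] at h8
          have h9 : H''.degree x = 0 := by
            rw [hH'']; exact delA_degree_zero H A (Finset.mem_coe.mp hxA)
          omega
        set Fam : Fin (k+1) → Set V := Fin.cons ((A : Finset V) : Set V) F with hFam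
        have hFam0 : Fam 0 = ((A : Finset V) : Set V) := by rw [hFam]; simp
        have hFamS : ∀ i : Fin k, Fam i.succ = F i := by
          intro i; rw [hFam]; simp
        refine ⟨k+1, Fam, ?_, ?_, ?_⟩
        · intro i j hij
          induction i using Fin.cases with
          | zero =>
            induction j using Fin.cases with
            | zero => exact absurd rfl hij
            | succ j' => rw [hFam0, hFamS]; exact hFA j'
          | succ i' =>
            induction j using Fin.cases with
            | zero => rw [hFam0, hFamS]; exact (hFA i').symm
            | succ j' =>
              have hne : i' ≠ j' := fun h => hij (by rw [h])
              rw [hFamS, hFamS]; exact hdisj i' j' hne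
        · intro i
          induction i using Fin.cases with
          | zero =>
            rw [hFam0]
            rw [Set.ncard_coe_finset]
            refine ⟨hAedge, hAtri, hArad, ?_⟩
            intro x hx
            simp only [Set.mem_setOf_eq]
            exact hAsupp x (Finset.mem_coe.mp hx)
          | succ i' =>
            rw [hFamS]
            obtain ⟨h1, h2, h3, h4⟩ := hcond i'
            refine ⟨le_trans h1 ?_, le_trans h2 ?_, radius_mono hle _ h3, ?_⟩
            · exact_mod_cast edgesWithin_mono hle (F i')
            · exact_mod_cast trianglesWithin_mono hle (F i')
            · intro x hx
              have h5 := h4 hx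
              simp only [Set.mem_setOf_eq] at h5 ⊢
              exact lt_of_lt_of_le h5 (degree_mono hle x)
        · -- capture accounting
          have hsumeq : (∑ i : Fin (k+1), (trianglesWithin H (Fam i) : ℝ))
              = (trianglesWithin H ↑A : ℝ) + ∑ i : Fin k, (trianglesWithin H (F i) : ℝ) := by
            rw [Fin.sum_univ_succ, hFam0]
            congr 1
          rw [hsumeq]
          have hw'' : (wedgeCount H'' : ℝ) ≤ (wedgeCount H : ℝ) := by
            exact_mod_cast wedgeCount_mono hle
          have hsum'' : (∑ i : Fin k, (trianglesWithin H'' (F i) : ℝ))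
              ≤ ∑ i : Fin k, (trianglesWithin H (F i) : ℝ) := by
            refine Finset.sum_le_sum (fun i _ => ?_)
            exact_mod_cast trianglesWithin_mono hle (F i)
          have hc : (0:ℝ) ≤ θ^4/8192 := by positivity
          have h10 : θ^4/8192 * θ * (wedgeCount H'' : ℝ) ≤ θ^4/8192 * θ * (wedgeCount H : ℝ) :=
            mul_le_mul_of_nonneg_left hw'' (by positivity)
          have h11 : θ^4/8192 * (((tri H).card:ℝ) - ((tri H'').card:ℝ))
              ≤ (trianglesWithin H ↑A : ℝ) := hAcap
          nlinarith [hcap, hsum'', h10, h11]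
      · -- no triangles
        refine ⟨0, Fin.elim0, fun i => i.elim0, fun i => i.elim0, ?_⟩
        have h0 : (tri H).card = 0 := by
          rw [Finset.card_eq_zero]
          exact Finset.not_nonempty_iff_eq_empty.mp htri0
        have hsum0 : (∑ i : Fin 0, (trianglesWithin H (Fin.elim0 i) : ℝ)) = 0 := by simp
        rw [h0, hsum0]
        have h1 : (0:ℝ) ≤ θ * (wedgeCount H : ℝ) := by positivity
        have hc : (0:ℝ) ≤ θ^4/8192 := by positivity
        have h2 : ((0:ℕ):ℝ) - θ * (wedgeCount H : ℝ) ≤ 0 := by push_cast; linarith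
        calc θ^4/8192 * (((0:ℕ):ℝ) - θ * (wedgeCount H : ℝ))
            ≤ θ^4/8192 * 0 := mul_le_mul_of_nonneg_left h2 hc
          _ = 0 := by ring

end TKD

/-- Inverse theorem for triangle-dense graphs: there is an absolute constant `κ > 0`
such that every `δ`-triangle-dense finite simple graph admits a `κδ⁴`-tightly-knit
family capturing at least a `κδ⁴` fraction of its triangles. -/
theorem tightly_knit_inverse_theorem :
    ∃ κ : ℝ, 0 < κ ∧
      ∀ (V : Type) [Fintype V], ∀ (G : SimpleGraph V) (δ : ℝ),
        0 < δ → δ ≤ 1 → δ ≤ triangleDensity G →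
          ∃ (k : ℕ) (F : Fin k → Set V), IsTightlyKnit G (κ * δ ^ 4) F ∧
            κ * δ ^ 4 * (triangleCount G : ℝ) ≤ ∑ i, (trianglesWithin G (F i) : ℝ) := by
  classical
  refine ⟨(1:ℝ)/8388608, by norm_num, ?_⟩
  intro V _inst G δ hδ0 hδ1 hδτ
  have hw0 : wedgeCount G ≠ 0 := by
    intro h
    rw [triangleDensity, if_pos h] at hδτ
    linarith
  have hwpos : (0:ℝ) < (wedgeCount G : ℝ) := by
    have h1 : 0 < wedgeCount G := Nat.pos_of_ne_zero hw0
    exact_mod_cast h1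
  have hdens : δ * (wedgeCount G : ℝ) ≤ 3 * (triangleCount G : ℝ) := by
    rw [triangleDensity, if_neg hw0] at hδτ
    exact (le_div_iff₀ hwpos).mp hδτ
  obtain ⟨k, F, hdisj, hcond, hcap⟩ :=
    TKD.main_induction (V := V) δ hδ0 hδ1 G.edgeSet.ncard G le_rfl
  have hκρ : (1:ℝ)/8388608 * δ^4 ≤ (δ/4)^4/8192 := by
    have h1 : (0:ℝ) ≤ δ^4 := by positivity
    nlinarith
  refine ⟨k, F, ⟨hdisj, ?_⟩, ?_⟩
  · intro i
    obtain ⟨h1, h2, h3, h4⟩ := hcond i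
    refine ⟨?_, ?_, h3⟩
    · exact le_trans (mul_le_mul_of_nonneg_right hκρ (Nat.cast_nonneg _)) h1
    · exact le_trans (mul_le_mul_of_nonneg_right hκρ (Nat.cast_nonneg _)) h2
  · have ht : triangleCount G = (TKD.tri G).card := TKD.triangleCount_eq G
    have hc : (0:ℝ) ≤ (δ/4)^4/8192 := by positivity
    have h2 : (triangleCount G : ℝ)/4
        ≤ (triangleCount G : ℝ) - (δ/4)*(wedgeCount G : ℝ) := by linarith
    calc (1:ℝ)/8388608 * δ^4 * (triangleCount G : ℝ)
        = (δ/4)^4/8192 * ((triangleCount G : ℝ)/4) := by ring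
      _ ≤ (δ/4)^4/8192 * ((triangleCount G : ℝ) - (δ/4)*(wedgeCount G : ℝ)) :=
          mul_le_mul_of_nonneg_left h2 hc
      _ = (δ/4)^4/8192 * (((TKD.tri G).card : ℝ) - (δ/4)*(wedgeCount G : ℝ)) := by rw [ht]
      _ ≤ ∑ i, (trianglesWithin G (F i) : ℝ) := hcap
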